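/- Let φ ∈ L^∞(𝕋) and suppose p = mq + 1 for some m ≥ 2 and q ≥ 1, with i = q−1 and j = p−1. Let C_p^{i,j} be the transposition conjugation on H²(𝔻) swapping coefficients of z^{i+pk} and z^{j+pk} and conjugating the others. Then T_φ is C_p^{i,j}-symmetric if and only if φ̂(pl) = φ̂(−pl) for all l ∈ ℤ, and φ̂(r+pl) = 0 for all l ∈ ℤ and 1 ≤ r ≤ p−1. -/

import Mathlib

open scoped ComplexConjugate

/-- The Hardy space `H²(𝔻)`, identified with `ℓ²(ℕ, ℂ)` via `z^n ↦ e n`. -/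
noncomputable abbrev HardySpace := lp (fun _ : ℕ => ℂ) 2

/-- The standard basis vector `e j`, corresponding to `z^j`. -/
noncomputable def e (j : ℕ) : HardySpace := lp.single 2 j 1

namespace CpijAux

/-- The swap-like involution on `ℕ`. -/
def sg (p i j d n : ℕ) : ℕ :=
  if n % p = i then n + d else if n % p = j then n - d else n

variable {p i j d : ℕ}

theorem sg_i {n : ℕ} (h : n % p = i) : sg p i j d n = n + d := by simp [sg, h]

theorem sg_j (hij : i ≠ j) {n : ℕ} (h : n % p = j) : sg p i j d n = n - d := by
  simp [sg, h, Ne.symm hij]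

theorem sg_o {n : ℕ} (h1 : n % p ≠ i) (h2 : n % p ≠ j) : sg p i j d n = n := by
  simp [sg, h1, h2]

theorem mod_i (hjp : j < p) (hid : i + d = j) {n : ℕ} (h : n % p = i) :
    (n + d) % p = j := by
  rw [Nat.add_mod, h, Nat.mod_eq_of_lt (show d < p by omega), hid, Nat.mod_eq_of_lt hjp]

theorem d_le_of_mod_j (hid : i + d = j) {n : ℕ} (h : n % p = j) : d ≤ n := by
  have := Nat.mod_le n p; omega

theorem mod_j (hip : i < p) (hid : i + d = j) {n : ℕ} (h : n % p = j) :
    (n - d) % p = i := by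
  have h1 : n % p + p * (n / p) = n := Nat.mod_add_div n p
  have h2 : n - d = i + p * (n / p) := by omega
  rw [h2, Nat.add_mul_mod_self_left, Nat.mod_eq_of_lt hip]

theorem sg_invol (hip : i < p) (hjp : j < p) (hid : i + d = j) (hdp : 0 < d) :
    Function.Involutive (sg p i j d) := by
  intro n
  have hij : i ≠ j := by omega
  by_cases h1 : n % p = i
  · rw [sg_i h1, sg_j hij (mod_i hjp hid h1)]
    omega
  · by_cases h2 : n % p = j
    · have hd : d ≤ n := d_le_of_mod_j hid h2
      rw [sg_j hij h2, sg_i (mod_j hip hid h2)]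
      omega
    · rw [sg_o h1 h2, sg_o h1 h2]

theorem sg_mod_eq (hip : i < p) (hjp : j < p) (hid : i + d = j) (hdp : 0 < d) (n : ℕ) :
    sg p i j d n % p = if n % p = i then j else if n % p = j then i else n % p := by
  have hij : i ≠ j := by omega
  by_cases h1 : n % p = i
  · rw [sg_i h1, mod_i hjp hid h1, if_pos h1]
  · by_cases h2 : n % p = j
    · rw [sg_j hij h2, mod_j hip hid h2, if_neg h1, if_pos h2]
    · rw [sg_o h1 h2, if_neg h1, if_neg h2]

theorem sg_mod_inj (hip : i < p) (hjp : j < p) (hid : i + d = j) (hdp : 0 < d) {a b : ℕ}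
    (h : sg p i j d a % p = sg p i j d b % p) : a % p = b % p := by
  rw [sg_mod_eq hip hjp hid hdp, sg_mod_eq hip hjp hid hdp] at h
  have h1 : a % p < p := Nat.mod_lt a (by omega)
  have h2 : b % p < p := Nat.mod_lt b (by omega)
  split_ifs at h <;> omega

theorem modeq_iff (p a b : ℕ) : a % p = b % p ↔ (p : ℤ) ∣ (b : ℤ) - a :=
  Nat.modEq_iff_dvd

theorem comb (p i j m q d : ℕ) (hm : 2 ≤ m) (hq : 1 ≤ q) (hp : p = m * q + 1)
    (hi : i = q - 1) (hj : j = p - 1) (hd : d = p - q)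
    (φhat : ℤ → ℂ) (hsq : Summable fun k => ‖φhat k‖ ^ 2) :
    (∀ a b : ℕ, φhat ((sg p i j d a : ℤ) - (sg p i j d b : ℤ)) = φhat ((b : ℤ) - a)) ↔
      ((∀ l : ℤ, φhat ((p : ℤ) * l) = φhat (-((p : ℤ) * l))) ∧
        ∀ (l : ℤ) (r : ℕ), 1 ≤ r → r ≤ p - 1 → φhat ((r : ℤ) + p * l) = 0) := by
  have hq2 : 2 * q ≤ m * q := Nat.mul_le_mul_right q hm
  have hip : i < p := by omega
  have hjp : j < p := by omega
  have hdp : 0 < d := by omega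
  have hid : i + d = j := by omega
  have hij : i ≠ j := by omega
  have hqp : q < p := by omega
  have hqi : q ≠ i := by omega
  have hqj : q ≠ j := by omega
  have h2dp : 2 * d ≠ p := by omega
  have hdZ : ((d : ℤ)) = (j : ℤ) - i := by push_cast; omega
  have hpdZ : ¬ (p : ℤ) ∣ (d : ℤ) := by
    rw [Int.natCast_dvd_natCast]
    intro hcon
    have := Nat.le_of_dvd hdp hcon
    omega
  have hpd2Z : ¬ (p : ℤ) ∣ 2 * (d : ℤ) := by
    rw [show (2 : ℤ) * d = ((2 * d : ℕ) : ℤ) by push_cast; ring, Int.natCast_dvd_natCast]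
    intro hcon
    obtain ⟨c, hc⟩ := hcon
    have hc2 : c < 2 := by
      by_contra hcc
      have : p * 2 ≤ p * c := Nat.mul_le_mul_left p (by omega)
      omega
    interval_cases c <;> omega
  constructor
  · intro hF
    -- helper: realize any residue/offset as a pair of naturals
    have pair : ∀ (r : ℕ) (z : ℤ), r < p →
        ∃ A B : ℕ, A % p = r ∧ (B : ℤ) = (A : ℤ) + z ∧ (p : ℤ) ≤ (B : ℤ) := by
      intro r z hr
      have habs1 : -|z| ≤ z := neg_abs_le z
      have habs2 : z ≤ |z| := le_abs_self z
      have hp1 : (1 : ℤ) ≤ (p : ℤ) := by exact_mod_cast (show 1 ≤ p by omega)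
      have h1 : (p : ℤ) + |z| ≤ (p : ℤ) * (|z| + 1) := by nlinarith [abs_nonneg z]
      have hAc : ((r + p * (z.natAbs + 1) : ℕ) : ℤ) = (r : ℤ) + (p : ℤ) * (|z| + 1) := by
        push_cast [Int.natCast_natAbs]; ring
      set A := r + p * (z.natAbs + 1) with hA
      have h2 : 0 ≤ (A : ℤ) + z := by rw [hAc]; omega
      refine ⟨A, ((A : ℤ) + z).toNat, ?_, Int.toNat_of_nonneg h2, ?_⟩
      · rw [hA, Nat.add_mul_mod_self_left, Nat.mod_eq_of_lt hr]
      · rw [Int.toNat_of_nonneg h2, hAc]; omega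
    have M1 : ∀ z : ℤ, ¬(p:ℤ) ∣ z → ¬(p:ℤ) ∣ (z - d) → φhat ((d:ℤ) - z) = φhat z := by
      intro z hz hzd
      obtain ⟨A, B, hA, hB, hBp⟩ := pair i z hip
      have hBi : B % p ≠ i := by
        intro h
        apply hz
        have := (modeq_iff p A B).mp (by rw [hA, h])
        rwa [hB, add_sub_cancel_left] at this
      have hBj : B % p ≠ j := by
        intro h
        apply hzd
        have h1 : (p:ℤ) ∣ (B:ℤ) - j := (modeq_iff p j B).mp (by rw [h, Nat.mod_eq_of_lt hjp])
        have h2 : (p:ℤ) ∣ (A:ℤ) - i := (modeq_iff p i A).mp (by rw [hA, Nat.mod_eq_of_lt hip])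
        have he : z - d = ((B:ℤ) - j) - ((A:ℤ) - i) := by rw [hB, hdZ]; ring
        rw [he]; exact dvd_sub h1 h2
      have hF1 := hF A B
      rw [sg_i hA, sg_o hBi hBj] at hF1
      have e1 : ((A + d : ℕ) : ℤ) - (B:ℤ) = (d:ℤ) - z := by push_cast; omega
      have e2 : (B : ℤ) - A = z := by omega
      rwa [e1, e2] at hF1
    have M2 : ∀ z : ℤ, ¬(p:ℤ) ∣ z → ¬(p:ℤ) ∣ (z + d) → φhat (-(d:ℤ) - z) = φhat z := by
      intro z hz hzd
      obtain ⟨A, B, hA, hB, hBp⟩ := pair i (-z) hip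
      have hBi : B % p ≠ i := by
        intro h
        apply hz
        have := (modeq_iff p A B).mp (by rw [hA, h])
        rw [hB] at this
        have he : (A:ℤ) + -z - A = -z := by ring
        rw [he] at this
        exact (dvd_neg.mp this)
      have hBj : B % p ≠ j := by
        intro h
        apply hzd
        have h1 : (p:ℤ) ∣ (B:ℤ) - j := (modeq_iff p j B).mp (by rw [h, Nat.mod_eq_of_lt hjp])
        have h2 : (p:ℤ) ∣ (A:ℤ) - i := (modeq_iff p i A).mp (by rw [hA, Nat.mod_eq_of_lt hip])
        have he : z + d = -(((B:ℤ) - j) - ((A:ℤ) - i)) := by rw [hB, hdZ]; ring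
        rw [he]; exact dvd_neg.mpr (dvd_sub h1 h2)
      have hF1 := hF B A
      rw [sg_o hBi hBj, sg_i hA] at hF1
      have e1 : (B : ℤ) - ((A + d : ℕ) : ℤ) = -(d:ℤ) - z := by push_cast; omega
      have e2 : (A : ℤ) - B = z := by omega
      rwa [e1, e2] at hF1
    have M3 : ∀ z : ℤ, (p:ℤ) ∣ (z - d) → φhat (2*(d:ℤ) - z) = φhat z := by
      intro z hzd
      obtain ⟨A, B, hA, hB, hBp⟩ := pair i z hip
      have h2 : (p:ℤ) ∣ (A:ℤ) - i := (modeq_iff p i A).mp (by rw [hA, Nat.mod_eq_of_lt hip])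
      have hBj : B % p = j := by
        have h1 : (p:ℤ) ∣ (B:ℤ) - j := by
          have he : (B:ℤ) - j = ((A:ℤ) - i) + (z - d) := by rw [hB, hdZ]; ring
          rw [he]; exact dvd_add h2 hzd
        have := (modeq_iff p j B).mpr h1
        rw [Nat.mod_eq_of_lt hjp] at this
        exact this.symm
      have hdB : d ≤ B := by omega
      have hF1 := hF A B
      rw [sg_i hA, sg_j hij hBj] at hF1
      have e1 : ((A + d : ℕ) : ℤ) - ((B - d : ℕ) : ℤ) = 2*(d:ℤ) - z := by
        push_cast [hdB]; omega
      have e2 : (B : ℤ) - A = z := by omega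
      rwa [e1, e2] at hF1
    have M4 : ∀ z : ℤ, (p:ℤ) ∣ (z + d) → φhat (-(2*(d:ℤ)) - z) = φhat z := by
      intro z hzd
      obtain ⟨A, B, hA, hB, hBp⟩ := pair i (-z) hip
      have h2 : (p:ℤ) ∣ (A:ℤ) - i := (modeq_iff p i A).mp (by rw [hA, Nat.mod_eq_of_lt hip])
      have hBj : B % p = j := by
        have h1 : (p:ℤ) ∣ (B:ℤ) - j := by
          have he : (B:ℤ) - j = ((A:ℤ) - i) + (-(z + d)) := by rw [hB, hdZ]; ring
          rw [he]; exact dvd_add h2 (dvd_neg.mpr hzd)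
        have := (modeq_iff p j B).mpr h1
        rw [Nat.mod_eq_of_lt hjp] at this
        exact this.symm
      have hdB : d ≤ B := by omega
      have hF1 := hF B A
      rw [sg_j hij hBj, sg_i hA] at hF1
      have e1 : ((B - d : ℕ) : ℤ) - ((A + d : ℕ) : ℤ) = -(2*(d:ℤ)) - z := by
        push_cast [hdB]; omega
      have e2 : (A : ℤ) - B = z := by omega
      rwa [e1, e2] at hF1
    have hd1 : (1 : ℤ) ≤ (d : ℤ) := by exact_mod_cast hdp
    have hstep : ∀ z : ℤ, ¬(p:ℤ) ∣ z →
        ∃ w : ℤ, ¬(p:ℤ) ∣ w ∧ φhat w = φhat z ∧ w ≤ z - 2 := by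
      intro z hz
      by_cases c1 : (p:ℤ) ∣ (z - d)
      · refine ⟨z - 3*d, ?_, ?_, by omega⟩
        · intro hcon
          apply hpd2Z
          have he : 2*(d:ℤ) = (z - d) - (z - 3*d) := by ring
          rw [he]; exact dvd_sub c1 hcon
        · have h1 := M3 z c1
          have h2 := M2 (2*(d:ℤ) - z) ?_ ?_
          · rw [show -(d:ℤ) - (2*(d:ℤ) - z) = z - 3*d by ring] at h2
            exact h2.trans h1
          · intro hcon
            apply hpdZ
            have he : (d:ℤ) = (2*(d:ℤ) - z) + (z - d) := by ring
            rw [he]; exact dvd_add hcon c1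
          · intro hcon
            apply hpd2Z
            have he : 2*(d:ℤ) = (2*(d:ℤ) - z + d) + (z - d) := by ring
            rw [he]; exact dvd_add hcon c1
      · by_cases c2 : (p:ℤ) ∣ (z - 2*d)
        · refine ⟨z - 3*d, ?_, ?_, by omega⟩
          · intro hcon
            apply hpdZ
            have he : (d:ℤ) = (z - 2*d) - (z - 3*d) := by ring
            rw [he]; exact dvd_sub c2 hcon
          · have h1 := M1 z hz c1
            have h4 := M4 ((d:ℤ) - z) ?_
            · rw [show -(2*(d:ℤ)) - ((d:ℤ) - z) = z - 3*d by ring] at h4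
              exact h4.trans h1
            · have he : (d:ℤ) - z + d = -(z - 2*d) := by ring
              rw [he]; exact dvd_neg.mpr c2
        · refine ⟨z - 2*d, ?_, ?_, by omega⟩
          · exact c2
          · have h1 := M1 z hz c1
            have h2 := M2 ((d:ℤ) - z) ?_ ?_
            · rw [show -(d:ℤ) - ((d:ℤ) - z) = z - 2*d by ring] at h2
              exact h2.trans h1
            · intro hcon
              apply c1
              have he : z - d = -((d:ℤ) - z) := by ring
              rw [he]; exact dvd_neg.mpr hcon
            · intro hcon
              apply c2
              have he : z - 2*d = -((d:ℤ) - z + d) := by ring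
              rw [he]; exact dvd_neg.mpr hcon
    have V : ∀ z : ℤ, ¬(p:ℤ) ∣ z → φhat z = 0 := by
      intro z hz
      choose! w hw1 hw2 hw3 using hstep
      set g : ℕ → ℤ := fun t => w^[t] z with hg
      have key : ∀ t : ℕ, ¬(p:ℤ) ∣ g t ∧ φhat (g t) = φhat z ∧ g t ≤ z - 2*t := by
        intro t
        induction t with
        | zero => refine ⟨hz, rfl, by simp [hg]⟩
        | succ t ih =>
          obtain ⟨ih1, ih2, ih3⟩ := ih
          have h1 : g (t+1) = w (g t) := by
            simp only [hg, Function.iterate_succ_apply']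
          refine ⟨by rw [h1]; exact hw1 _ ih1, by rw [h1, hw2 _ ih1, ih2], ?_⟩
          rw [h1]
          have := hw3 _ ih1
          push_cast
          push_cast at ih3
          omega
      have hmono : StrictAnti g := by
        apply strictAnti_nat_of_succ_lt
        intro t
        have h1 : g (t+1) = w (g t) := by
          simp only [hg, Function.iterate_succ_apply']
        have := hw3 _ (key t).1
        omega
      have hsum : Summable fun t : ℕ => ‖φhat (g t)‖ ^ 2 := by
        have := hsq.comp_injective hmono.injective
        exact this
      have heq : (fun t : ℕ => ‖φhat (g t)‖ ^ 2) = fun _ : ℕ => ‖φhat z‖ ^ 2 := by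
        funext t; rw [(key t).2.1]
      rw [heq] at hsum
      have h0 : ‖φhat z‖ ^ 2 = 0 := (summable_const_iff (‖φhat z‖ ^ 2)).mp hsum
      have : ‖φhat z‖ = 0 := by nlinarith [norm_nonneg (φhat z)]
      exact norm_eq_zero.mp this
    constructor
    · intro l
      obtain ⟨A, B, hA, hB, hBp⟩ := pair q ((p:ℤ) * l) hqp
      have hBq : B % p = q := by
        have h1 : (p:ℤ) ∣ (B:ℤ) - q := by
          have he : (B:ℤ) - q = ((A:ℤ) - q) + (p:ℤ)*l := by rw [hB]; ring
          rw [he]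
          exact dvd_add ((modeq_iff p q A).mp (by rw [hA, Nat.mod_eq_of_lt hqp])) ⟨l, rfl⟩
        have := (modeq_iff p q B).mpr h1
        rw [Nat.mod_eq_of_lt hqp] at this
        exact this.symm
      have hF1 := hF B A
      rw [sg_o (by omega : B % p ≠ i) (by omega : B % p ≠ j),
          sg_o (by omega : A % p ≠ i) (by omega : A % p ≠ j)] at hF1
      have e1 : (B : ℤ) - A = (p:ℤ) * l := by omega
      have e2 : (A : ℤ) - B = -((p:ℤ) * l) := by omega
      rwa [e1, e2] at hF1
    · intro l r hr1 hr2
      apply V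
      intro hcon
      have h1 : (p:ℤ) ∣ (r:ℤ) := by
        have he : (r:ℤ) = ((r:ℤ) + p*l) - p*l := by ring
        rw [he]; exact dvd_sub hcon ⟨l, rfl⟩
      have h2 : (p:ℕ) ∣ r := by exact_mod_cast h1
      have := Nat.le_of_dvd (by omega) h2
      omega
  · rintro ⟨h1, h2⟩ a b
    have V' : ∀ z : ℤ, ¬(p:ℤ) ∣ z → φhat z = 0 := by
      intro z hz
      have hp0 : (0:ℤ) < p := by exact_mod_cast (show 0 < p by omega)
      have hr0 : z % p ≠ 0 := fun h => hz (Int.dvd_of_emod_eq_zero h)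
      have hrn : 0 ≤ z % p := Int.emod_nonneg z (by omega)
      have hrl : z % p < p := Int.emod_lt_of_pos z hp0
      set r := (z % p).toNat with hrdef
      have hrc : ((r:ℕ):ℤ) = z % p := Int.toNat_of_nonneg hrn
      have hpr : 1 ≤ r ∧ r ≤ p - 1 := by omega
      have := h2 (z / p) r hpr.1 hpr.2
      rwa [show (r:ℤ) + p * (z / p) = z from by rw [hrc]; exact Int.emod_add_mul_ediv z p] at this
    by_cases hmod : a % p = b % p
    · have hsab : (sg p i j d a : ℤ) - sg p i j d b = (a:ℤ) - b := by
        by_cases ha1 : a % p = i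
        · rw [sg_i ha1, sg_i (hmod ▸ ha1)]
          push_cast; ring
        · by_cases ha2 : a % p = j
          · have hb2 : b % p = j := hmod ▸ ha2
            have hda := d_le_of_mod_j hid ha2
            have hdb := d_le_of_mod_j hid hb2
            rw [sg_j hij ha2, sg_j hij hb2]
            omega
          · rw [sg_o ha1 ha2, sg_o (fun h => ha1 (hmod.trans h)) (fun h => ha2 (hmod.trans h))]
      rw [hsab]
      obtain ⟨l, hl⟩ : (p:ℤ) ∣ (a:ℤ) - b := (modeq_iff p b a).mp hmod.symm
      rw [hl, show (b:ℤ) - a = -((p:ℤ)*l) from by omega]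
      exact h1 l
    · have hV1 : φhat ((b:ℤ) - a) = 0 :=
        V' _ (fun hcon => hmod ((modeq_iff p a b).mpr hcon))
      have hV2 : φhat ((sg p i j d a : ℤ) - sg p i j d b) = 0 := by
        apply V'
        intro hcon
        have hss : sg p i j d b % p = sg p i j d a % p :=
          (modeq_iff p (sg p i j d b) (sg p i j d a)).mpr hcon
        exact hmod (sg_mod_inj hip hjp hid hdp hss.symm)
      rw [hV1, hV2]

theorem oper (p i j d : ℕ) (hip : i < p) (hjp : j < p) (hid : i + d = j) (hdp : 0 < d)
    (φhat : ℤ → ℂ)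
    (T : HardySpace →L[ℂ] HardySpace)
    (hT : ∀ j' m : ℕ, (T (e j')) m = φhat ((m : ℤ) - (j' : ℤ)))
    (C : HardySpace → HardySpace)
    (hC : ∀ (a : HardySpace) (n : ℕ), (C a) n = conj (a (sg p i j d n))) :
    (∀ x, C (T (C x)) = ContinuousLinearMap.adjoint T x) ↔
      (∀ a b : ℕ, φhat ((sg p i j d a : ℤ) - (sg p i j d b : ℤ)) = φhat ((b : ℤ) - a)) := by
  have hinv := sg_invol hip hjp hid hdp
  have coord : ∀ (x : HardySpace) (k : ℕ), (inner (𝕜 := ℂ) (e k) x) = x k := by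
    intro x k
    rw [e, lp.inner_single_left]
    simp [RCLike.inner_apply]
  have eapp : ∀ a b : ℕ, (e a : ∀ _ : ℕ, ℂ) b = if b = a then 1 else 0 := by
    intro a b
    by_cases h : b = a
    · rw [e, h, lp.single_apply_self, if_pos rfl]
    · rw [e, lp.single_apply_ne 2 a _ h, if_neg h]
  have Tcoord : ∀ (y : HardySpace) (k : ℕ), (T y) k = ∑' n : ℕ, y n * φhat ((k : ℤ) - n) := by
    intro y k
    have h0 : HasSum (fun n : ℕ => lp.single 2 n (y n)) y :=
      lp.hasSum_single (by norm_num) y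
    have h1 := h0.mapL ((innerSL ℂ (e k)).comp T)
    have h2 : (fun n : ℕ => ((innerSL ℂ (e k)).comp T) (lp.single 2 n (y n)))
        = fun n : ℕ => y n * φhat ((k : ℤ) - n) := by
      funext n
      have hs : lp.single 2 n (y n) = y n • e n := by
        rw [e, ← lp.single_smul]
        congr 1
        simp
      rw [hs]
      simp only [ContinuousLinearMap.comp_apply, map_smul, innerSL_apply_apply, inner_smul_right]
      rw [coord (T (e n)) k, hT n k]
      simp [smul_eq_mul]
    rw [h2] at h1
    have h3 : ((innerSL ℂ (e k)).comp T) y = (T y) k := by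
      simp only [ContinuousLinearMap.comp_apply, innerSL_apply_apply]
      exact coord (T y) k
    rw [h3] at h1
    exact h1.tsum_eq.symm
  have Acoord : ∀ (x : HardySpace) (k : ℕ),
      ((ContinuousLinearMap.adjoint T) x) k = ∑' n : ℕ, conj (φhat ((n : ℤ) - k)) * x n := by
    intro x k
    rw [← coord ((ContinuousLinearMap.adjoint T) x) k,
      ContinuousLinearMap.adjoint_inner_right, lp.inner_eq_tsum]
    exact tsum_congr fun n => by rw [RCLike.inner_apply, hT k n, mul_comm]
  constructor
  · intro H a b
    have hCe : ∀ n : ℕ, C (e n) = e (sg p i j d n) := by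
      intro n
      apply lp.ext
      funext k
      rw [hC (e n) k, eapp n (sg p i j d k), eapp (sg p i j d n) k]
      have hiff : (sg p i j d k = n) ↔ (k = sg p i j d n) := by
        constructor
        · intro h; rw [← h, hinv k]
        · intro h; rw [h, hinv n]
      rw [if_congr hiff rfl rfl]
      split_ifs <;> simp
    have h1 := congrFun (congrArg (fun z : HardySpace => (z : ∀ _ : ℕ, ℂ)) (H (e b))) a
    simp only at h1
    rw [hCe b, hC (T (e (sg p i j d b))) a, hT (sg p i j d b) (sg p i j d a)] at h1
    have h4 : ((ContinuousLinearMap.adjoint T) (e b)) a = conj (φhat ((b : ℤ) - a)) := by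
      rw [Acoord]
      rw [show (fun n : ℕ => conj (φhat ((n : ℤ) - a)) * (e b : ∀ _ : ℕ, ℂ) n)
            = fun n : ℕ => if n = b then conj (φhat ((b : ℤ) - a)) else 0 by
        funext n
        rw [eapp b n]
        split_ifs with h
        · rw [h]; ring
        · ring]
      exact tsum_ite_eq b _
    rw [h4] at h1
    have := congrArg conj h1
    simpa using this
  · intro F x
    apply lp.ext
    funext k
    show (C (T (C x))) k = ((ContinuousLinearMap.adjoint T) x) k
    rw [hC (T (C x)) k, Tcoord (C x) (sg p i j d k), Acoord x k]
    have hstar : conj (∑' n : ℕ, (C x) n * φhat ((sg p i j d k : ℤ) - n))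
        = ∑' n : ℕ, conj ((C x) n * φhat ((sg p i j d k : ℤ) - n)) := by
      rw [starRingEnd_apply, tsum_star]
      exact tsum_congr fun n => by rw [starRingEnd_apply]
    rw [hstar]
    have h5 : (fun n : ℕ => conj ((C x) n * φhat ((sg p i j d k : ℤ) - n)))
        = fun n : ℕ => x (sg p i j d n) * conj (φhat ((sg p i j d k : ℤ) - n)) := by
      funext n
      rw [map_mul, hC x n, Complex.conj_conj]
    rw [h5]
    have h6 : ∑' n : ℕ, x (sg p i j d n) * conj (φhat ((sg p i j d k : ℤ) - n))
        = ∑' n : ℕ, x n * conj (φhat ((sg p i j d k : ℤ) - (sg p i j d n : ℤ))) := by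
      have h7 := Equiv.tsum_eq (hinv.toPerm (sg p i j d))
        (fun n : ℕ => x (sg p i j d n) * conj (φhat ((sg p i j d k : ℤ) - n)))
      rw [← h7]
      refine tsum_congr fun n => ?_
      rw [Function.Involutive.coe_toPerm]
      rw [hinv n]
    rw [h6]
    refine tsum_congr fun n => ?_
    rw [F k n, mul_comm]

end CpijAux

/-- Characterization of `C_p^{i,j}`-symmetric Toeplitz operators when `p = mq + 1` with `m ≥ 2`, `i = q-1`, `j = p-1`: `C_p^{i,j} T_φ C_p^{i,j} = T_φ*` iff `φhat (pl) = φhat (-pl)` for all `l ∈ ℤ`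
and `φhat (r + pl) = 0` for all `l ∈ ℤ` and `1 ≤ r ≤ p-1`. Here `φhat` is the (square-summable)
sequence of Fourier coefficients of `φ ∈ L^∞(𝕋)`, `T_φ` acts on the basis by
`(T_φ e_j)_m = φhat (m-j)`, and `C_p^{i,j}` swaps-and-conjugates the coefficients at indices
`i + pk` and `j + pk` and conjugates all others. -/
theorem toeplitz_Cpij_symmetric_iff_mq (p i j m q : ℕ) (hm : 2 ≤ m) (hq : 1 ≤ q)
    (hp : p = m * q + 1) (hi : i = q - 1) (hj : j = p - 1)
    (φhat : ℤ → ℂ) (hsq : Summable fun k => ‖φhat k‖ ^ 2)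
    (T : HardySpace →L[ℂ] HardySpace)
    (hT : ∀ j' m : ℕ, (T (e j')) m = φhat ((m : ℤ) - (j' : ℤ)))
    (C : HardySpace → HardySpace)
    (hC1 : ∀ (a : HardySpace) (k : ℕ), (C a) (i + p * k) = conj (a (j + p * k)))
    (hC2 : ∀ (a : HardySpace) (k : ℕ), (C a) (j + p * k) = conj (a (i + p * k)))
    (hC3 : ∀ (a : HardySpace) (k m : ℕ), m < p → m ≠ i → m ≠ j →
      (C a) (m + p * k) = conj (a (m + p * k))) :
    (∀ x, C (T (C x)) = ContinuousLinearMap.adjoint T x) ↔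
      ((∀ l : ℤ, φhat ((p : ℤ) * l) = φhat (-((p : ℤ) * l))) ∧
        ∀ (l : ℤ) (r : ℕ), 1 ≤ r → r ≤ p - 1 → φhat ((r : ℤ) + p * l) = 0) := by
  have hq2 : 2 * q ≤ m * q := Nat.mul_le_mul_right q hm
  have hip : i < p := by omega
  have hjp : j < p := by omega
  have hdp : 0 < p - q := by omega
  have hid : i + (p - q) = j := by omega
  have hij : i ≠ j := by omega
  have hC' : ∀ (a : HardySpace) (n : ℕ), (C a) n = conj (a (CpijAux.sg p i j (p - q) n)) := by
    intro a n
    have hmd : n % p + p * (n / p) = n := Nat.mod_add_div n p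
    by_cases h1 : n % p = i
    · rw [CpijAux.sg_i h1]
      have h2 : i + p * (n / p) = n := by omega
      have h3 : j + p * (n / p) = n + (p - q) := by omega
      have := hC1 a (n / p)
      rw [h2, h3] at this
      exact this
    · by_cases h2 : n % p = j
      · rw [CpijAux.sg_j hij h2]
        have hdn : p - q ≤ n := CpijAux.d_le_of_mod_j hid h2
        have h3 : j + p * (n / p) = n := by omega
        have h4 : i + p * (n / p) = n - (p - q) := by omega
        have := hC2 a (n / p)
        rw [h3, h4] at this
        exact this
      · rw [CpijAux.sg_o h1 h2]
        have := hC3 a (n / p) (n % p) (Nat.mod_lt n (by omega)) h1 h2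
        rw [hmd] at this
        exact this
  rw [CpijAux.oper p i j (p - q) hip hjp hid hdp φhat T hT C hC']
  exact CpijAux.comb p i j m q (p - q) hm hq hp hi hj rfl φhat hsq
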